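/- Let d ≥ 1, let k be a nonnegative integer, let γ₁ > 0, and set γ := γ₁/2. Let g : ℝ^d \ {0} → ℝ be differentiable with g(t·x) = g(x) for all t > 0 and all x ≠ 0 (positively homogeneous of degree 0), with |g(x)| ≤ M₀ and ‖fderiv g x‖ ≤ M₁ for all x on the unit sphere. Let χ : ℝ^d → ℝ be continuously differentiable with |χ(x)| ≤ M₂ and ‖fderiv χ x‖ ≤ M₃ for all x. Then the function u(x) := (log ‖x‖)^k · ‖x‖^{γ₁} · g(x) · χ(x) is differentiable on ℝ^d \ {0}, and there exists C > 0 such that ‖fderiv ℝ u x‖ ≤ C · ‖x‖^{γ−1} for all x with 0 < ‖x‖ ≤ 1. -/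

import Mathlib

open Real in
lemma log_pow_rpow_bound (j : ℕ) {γ : ℝ} (hγ : 0 < γ) :
    ∃ C : ℝ, 0 < C ∧ ∀ r : ℝ, 0 < r → r ≤ 1 → |Real.log r| ^ j * r ^ γ ≤ C := by
  set ε : ℝ := γ / (j + 1) with hε
  have hεpos : 0 < ε := by positivity
  refine ⟨ε⁻¹ ^ j, by positivity, fun r hr hr1 => ?_⟩
  have hlogle : |Real.log r| ≤ ε⁻¹ * r ^ (-ε) := by
    have h1 : |Real.log r| = Real.log r⁻¹ := by
      rw [Real.log_inv, abs_of_nonpos (Real.log_nonpos hr.le hr1)]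
    have h2 : ε * Real.log r⁻¹ = Real.log ((r⁻¹) ^ ε) := (Real.log_rpow (by positivity) ε).symm
    have h3 : Real.log ((r⁻¹) ^ ε) ≤ (r⁻¹) ^ ε - 1 := Real.log_le_sub_one_of_pos (by positivity)
    have h4 : (r⁻¹ : ℝ) ^ ε = r ^ (-ε) := by
      rw [Real.inv_rpow hr.le, ← Real.rpow_neg hr.le]
    rw [h1]
    have : ε * Real.log r⁻¹ ≤ r ^ (-ε) := by
      rw [h2, ← h4]; linarith [h3, Real.rpow_nonneg (by positivity : (0:ℝ) ≤ r⁻¹) ε]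
    calc Real.log r⁻¹ = ε⁻¹ * (ε * Real.log r⁻¹) := by field_simp
    _ ≤ ε⁻¹ * r ^ (-ε) := by
        apply mul_le_mul_of_nonneg_left this (by positivity)
  have h5 : |Real.log r| ^ j ≤ (ε⁻¹ * r ^ (-ε)) ^ j :=
    pow_le_pow_left₀ (abs_nonneg _) hlogle j
  calc |Real.log r| ^ j * r ^ γ ≤ (ε⁻¹ * r ^ (-ε)) ^ j * r ^ γ := by
        apply mul_le_mul_of_nonneg_right h5 (by positivity)
    _ = ε⁻¹ ^ j * r ^ (γ - ε * j) := by
        rw [mul_pow, ← Real.rpow_natCast (r ^ (-ε)), ← Real.rpow_mul hr.le, mul_assoc,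
          ← Real.rpow_add hr]
        ring_nf
    _ ≤ ε⁻¹ ^ j * 1 := by
        apply mul_le_mul_of_nonneg_left _ (by positivity)
        apply Real.rpow_le_one hr.le hr1
        have : ε * j < ε * (j + 1) := by
          apply mul_lt_mul_of_pos_left _ hεpos
          exact_mod_cast lt_add_one (j:ℝ)
        have : ε * (j+1) = γ := by rw [hε, div_mul_cancel₀ _ (by positivity)]
        nlinarith
    _ = ε⁻¹ ^ j := mul_one _


set_option maxHeartbeats 1000000 in
/-- Second bound of (C-singamma): the singular term
`u = (log ‖x‖)^k ‖x‖^{γ₁} g(x) χ(x)`, with degree-zero positively homogeneous angular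
factor `g` of class `W¹_∞` and a `C¹` cutoff `χ`, is differentiable away from the origin
and its derivative satisfies `‖Du(x)‖ ≤ C ‖x‖^{γ-1}` for `0 < ‖x‖ ≤ 1`, where `γ = γ₁/2`. -/
theorem stmt_3 (d : ℕ) (hd : 1 ≤ d) (k : ℕ) (γ₁ : ℝ) (hγ₁ : 0 < γ₁)
    (γ : ℝ) (hγ : γ = γ₁ / 2)
    (g : EuclideanSpace ℝ (Fin d) → ℝ)
    (hgdiff : ∀ x : EuclideanSpace ℝ (Fin d), x ≠ 0 → DifferentiableAt ℝ g x)
    (hghom : ∀ t : ℝ, 0 < t → ∀ x : EuclideanSpace ℝ (Fin d), x ≠ 0 → g (t • x) = g x)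
    (M₀ M₁ : ℝ)
    (hg0 : ∀ x : EuclideanSpace ℝ (Fin d), ‖x‖ = 1 → |g x| ≤ M₀)
    (hg1 : ∀ x : EuclideanSpace ℝ (Fin d), ‖x‖ = 1 → ‖fderiv ℝ g x‖ ≤ M₁)
    (χ : EuclideanSpace ℝ (Fin d) → ℝ) (hχ : ContDiff ℝ 1 χ)
    (M₂ M₃ : ℝ)
    (hχ0 : ∀ x, |χ x| ≤ M₂) (hχ1 : ∀ x, ‖fderiv ℝ χ x‖ ≤ M₃)
    (u : EuclideanSpace ℝ (Fin d) → ℝ)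
    (hu : ∀ x, u x = (Real.log ‖x‖) ^ k * ‖x‖ ^ γ₁ * g x * χ x) :
    (∀ x : EuclideanSpace ℝ (Fin d), x ≠ 0 → DifferentiableAt ℝ u x) ∧
    ∃ C : ℝ, 0 < C ∧ ∀ x : EuclideanSpace ℝ (Fin d), 0 < ‖x‖ → ‖x‖ ≤ 1 →
      ‖fderiv ℝ u x‖ ≤ C * ‖x‖ ^ (γ - 1) := by
  have hufun : u = fun x => Real.log ‖x‖ ^ k * ‖x‖ ^ γ₁ * g x * χ x := funext hu
  subst hufun
  -- nonnegativity of the constants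
  have he : ∃ e : EuclideanSpace ℝ (Fin d), ‖e‖ = 1 := by
    refine ⟨EuclideanSpace.single ⟨0, hd⟩ (1:ℝ), ?_⟩
    simp [EuclideanSpace.norm_single]
  obtain ⟨e, he⟩ := he
  have hM₀ : 0 ≤ M₀ := le_trans (abs_nonneg _) (hg0 e he)
  have hM₁ : 0 ≤ M₁ := le_trans (norm_nonneg _) (hg1 e he)
  have hM₂ : 0 ≤ M₂ := le_trans (abs_nonneg _) (hχ0 0)
  have hM₃ : 0 ≤ M₃ := le_trans (norm_nonneg _) (hχ1 0)
  -- bound on g away from the sphere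
  have hgb : ∀ x : EuclideanSpace ℝ (Fin d), x ≠ 0 → |g x| ≤ M₀ := by
    intro x hx
    have hxn : (0:ℝ) < ‖x‖ := norm_pos_iff.2 hx
    have h1 : ‖(‖x‖⁻¹ : ℝ) • x‖ = 1 := by
      rw [norm_smul, Real.norm_eq_abs, abs_of_pos (by positivity)]
      field_simp
    have := hg0 _ h1
    rwa [hghom ‖x‖⁻¹ (by positivity) x hx] at this
  -- bound on fderiv g away from the sphere
  have hgdb : ∀ x : EuclideanSpace ℝ (Fin d), x ≠ 0 → ‖fderiv ℝ g x‖ ≤ M₁ / ‖x‖ := by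
    intro x hx
    have hxn : (0:ℝ) < ‖x‖ := norm_pos_iff.2 hx
    set y : EuclideanSpace ℝ (Fin d) := (‖x‖⁻¹ : ℝ) • x with hy
    have hyn : ‖y‖ = 1 := by
      rw [hy, norm_smul, Real.norm_eq_abs, abs_of_pos (by positivity)]
      field_simp
    have hynz : y ≠ 0 := by
      intro h; rw [h] at hyn; simp at hyn
    have hsy : (‖x‖ : ℝ) • y = x := by
      rw [hy, smul_smul]; field_simp; exact one_smul ℝ x
    have hcomp : HasFDerivAt (fun z : EuclideanSpace ℝ (Fin d) => g ((‖x‖ : ℝ) • z)) ((‖x‖ : ℝ) • fderiv ℝ g x) y := by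
      have h1 : HasFDerivAt (fun z : EuclideanSpace ℝ (Fin d) => (‖x‖ : ℝ) • z)
          ((‖x‖ : ℝ) • ContinuousLinearMap.id ℝ (EuclideanSpace ℝ (Fin d))) y := (hasFDerivAt_id y).const_smul ‖x‖
      have h2 : HasFDerivAt g (fderiv ℝ g x) ((‖x‖ : ℝ) • y) := by
        rw [hsy]; exact (hgdiff x hx).hasFDerivAt
      have := h2.comp y h1
      simp [ContinuousLinearMap.comp_smul] at this; exact this
    have hev : (fun z : EuclideanSpace ℝ (Fin d) => g ((‖x‖ : ℝ) • z)) =ᶠ[nhds y] g := by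
      filter_upwards [IsOpen.mem_nhds isOpen_compl_singleton hynz] with z hz
      exact hghom ‖x‖ hxn z hz
    have heq : fderiv ℝ g y = (‖x‖ : ℝ) • fderiv ℝ g x := by
      rw [← hev.fderiv_eq]; exact hcomp.fderiv
    have h3 : ‖fderiv ℝ g y‖ = ‖x‖ * ‖fderiv ℝ g x‖ := by
      rw [heq, norm_smul, Real.norm_eq_abs, abs_of_pos hxn]
    have h4 := hg1 y hyn
    rw [h3] at h4
    rw [le_div_iff₀ hxn]
    linarith [h4]
  -- the explicit derivative
  have main : ∀ x : EuclideanSpace ℝ (Fin d), x ≠ 0 → HasFDerivAt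
      (fun x : EuclideanSpace ℝ (Fin d) => Real.log ‖x‖ ^ k * ‖x‖ ^ γ₁ * g x * χ x)
      ((Real.log ‖x‖ ^ k * ‖x‖ ^ γ₁ * g x) • fderiv ℝ χ x +
        χ x • ((Real.log ‖x‖ ^ k * ‖x‖ ^ γ₁) • fderiv ℝ g x +
          g x • (((↑k * Real.log ‖x‖ ^ (k - 1) * ‖x‖⁻¹) * ‖x‖ ^ γ₁ +
              Real.log ‖x‖ ^ k * (γ₁ * ‖x‖ ^ (γ₁ - 1))) •
            fderiv ℝ (fun y : EuclideanSpace ℝ (Fin d) => ‖y‖) x))) x := by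
    intro x hx
    have hxn : (0:ℝ) < ‖x‖ := norm_pos_iff.2 hx
    have hnorm : HasFDerivAt (fun y : EuclideanSpace ℝ (Fin d) => ‖y‖) (fderiv ℝ (fun y : EuclideanSpace ℝ (Fin d) => ‖y‖) x) x :=
      ((differentiableAt_id.norm ℝ hx)).hasFDerivAt
    have hF : HasDerivAt (fun r : ℝ => Real.log r ^ k * r ^ γ₁)
        ((↑k * Real.log ‖x‖ ^ (k - 1) * ‖x‖⁻¹) * ‖x‖ ^ γ₁ +
          Real.log ‖x‖ ^ k * (γ₁ * ‖x‖ ^ (γ₁ - 1))) ‖x‖ :=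
      ((Real.hasDerivAt_log hxn.ne').pow k).mul
        (Real.hasDerivAt_rpow_const (Or.inl hxn.ne'))
    have hA : HasFDerivAt (fun y : EuclideanSpace ℝ (Fin d) => Real.log ‖y‖ ^ k * ‖y‖ ^ γ₁)
        (((↑k * Real.log ‖x‖ ^ (k - 1) * ‖x‖⁻¹) * ‖x‖ ^ γ₁ +
          Real.log ‖x‖ ^ k * (γ₁ * ‖x‖ ^ (γ₁ - 1))) •
          fderiv ℝ (fun y : EuclideanSpace ℝ (Fin d) => ‖y‖) x) x :=
      hF.comp_hasFDerivAt x hnorm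
    exact (hA.mul (hgdiff x hx).hasFDerivAt).mul (hχ.differentiable one_ne_zero x).hasFDerivAt
  refine ⟨fun x hx => (main x hx).differentiableAt, ?_⟩
  have hγpos : 0 < γ := by rw [hγ]; positivity
  obtain ⟨C₀, hC₀, hB₀⟩ := log_pow_rpow_bound k hγpos
  obtain ⟨C₁, hC₁, hB₁⟩ := log_pow_rpow_bound (k - 1) hγpos
  refine ⟨C₀ * (M₀ * M₃ + M₂ * M₁ + γ₁ * M₂ * M₀) + C₁ * (k * M₂ * M₀) + 1, by positivity,
    fun x hxn hx1 => ?_⟩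
  have hx : x ≠ 0 := norm_pos_iff.1 hxn
  rw [(main x hx).fderiv]
  set r : ℝ := ‖x‖ with hr
  set L : ℝ := |Real.log r| with hL
  have hLnn : 0 ≤ L := abs_nonneg _
  have hN : ‖fderiv ℝ (fun y : EuclideanSpace ℝ (Fin d) => ‖y‖) x‖ ≤ 1 := by
    simpa using norm_fderiv_le_of_lipschitz ℝ (lipschitzWith_one_norm (E := EuclideanSpace ℝ (Fin d)))
  -- rpow identities
  have hQ : r ^ γ₁ = r ^ γ * r ^ γ := by
    rw [← Real.rpow_add hxn]; congr 1; rw [hγ]; ring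
  have hP : r ^ (γ₁ - 1) = r ^ γ * r ^ (γ - 1) := by
    rw [← Real.rpow_add hxn]; congr 1; rw [hγ]; ring
  have hinv : r⁻¹ * r ^ γ₁ = r ^ (γ₁ - 1) := by
    rw [Real.rpow_sub hxn, Real.rpow_one]; field_simp
  have hrg : 0 ≤ r ^ γ := Real.rpow_nonneg hxn.le _
  have hrg1 : 0 ≤ r ^ (γ - 1) := Real.rpow_nonneg hxn.le _
  have hle : r ^ γ ≤ r ^ (γ - 1) :=
    Real.rpow_le_rpow_of_exponent_ge hxn hx1 (by linarith)
  have hBk := hB₀ r hxn hx1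
  have hBk1 := hB₁ r hxn hx1
  -- bound each piece
  have habsA : |Real.log r ^ k * r ^ γ₁| = L ^ k * r ^ γ₁ := by
    rw [abs_mul, abs_pow, abs_of_nonneg (Real.rpow_nonneg hxn.le _)]
  have hgx := hgb x hx
  have hdg := hgdb x hx
  have hdgr : ‖fderiv ℝ g x‖ * r ≤ M₁ := by
    rw [← le_div_iff₀ hxn]; exact hdg
  have hF' : |(↑k * Real.log r ^ (k - 1) * r⁻¹) * r ^ γ₁ +
      Real.log r ^ k * (γ₁ * r ^ (γ₁ - 1))| ≤
      (↑k * L ^ (k - 1) + γ₁ * L ^ k) * r ^ (γ₁ - 1) := by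
    refine le_trans (abs_add_le _ _) ?_
    have h1 : |(↑k * Real.log r ^ (k - 1) * r⁻¹) * r ^ γ₁| = ↑k * L ^ (k - 1) * r ^ (γ₁ - 1) := by
      rw [abs_mul, abs_mul, abs_mul, abs_pow, Nat.abs_cast, abs_of_nonneg (by positivity : (0:ℝ) ≤ r⁻¹),
        abs_of_nonneg (Real.rpow_nonneg hxn.le _), mul_assoc, mul_assoc, hinv]
      ring
    have h2 : |Real.log r ^ k * (γ₁ * r ^ (γ₁ - 1))| = γ₁ * L ^ k * r ^ (γ₁ - 1) := by
      rw [abs_mul, abs_mul, abs_pow, abs_of_pos hγ₁, abs_of_nonneg (Real.rpow_nonneg hxn.le _)]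
      ring
    rw [h1, h2]; ring_nf; rfl
  have hrP : 0 ≤ r ^ (γ₁ - 1) := Real.rpow_nonneg hxn.le _
  have step : ‖(Real.log r ^ k * r ^ γ₁ * g x) • fderiv ℝ χ x +
        χ x • ((Real.log r ^ k * r ^ γ₁) • fderiv ℝ g x +
          g x • (((↑k * Real.log r ^ (k - 1) * r⁻¹) * r ^ γ₁ +
              Real.log r ^ k * (γ₁ * r ^ (γ₁ - 1))) •
            fderiv ℝ (fun y : EuclideanSpace ℝ (Fin d) => ‖y‖) x))‖ ≤
      (L ^ k * r ^ γ₁) * M₀ * M₃ +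
        M₂ * ((L ^ k * r ^ γ₁) * (M₁ / r) +
          M₀ * ((↑k * L ^ (k - 1) + γ₁ * L ^ k) * r ^ (γ₁ - 1))) := by
    refine le_trans (norm_add_le _ _) (add_le_add ?_ ?_)
    · rw [norm_smul, Real.norm_eq_abs, abs_mul, habsA]
      have h1 : 0 ≤ L ^ k * r ^ γ₁ := by positivity
      calc L ^ k * r ^ γ₁ * |g x| * ‖fderiv ℝ χ x‖
          ≤ L ^ k * r ^ γ₁ * M₀ * ‖fderiv ℝ χ x‖ := by
            apply mul_le_mul_of_nonneg_right (mul_le_mul_of_nonneg_left hgx h1) (norm_nonneg _)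
        _ ≤ L ^ k * r ^ γ₁ * M₀ * M₃ := by
            apply mul_le_mul_of_nonneg_left (hχ1 x) (by positivity)
    · rw [norm_smul, Real.norm_eq_abs]
      have hinner : ‖(Real.log r ^ k * r ^ γ₁) • fderiv ℝ g x +
          g x • (((↑k * Real.log r ^ (k - 1) * r⁻¹) * r ^ γ₁ +
              Real.log r ^ k * (γ₁ * r ^ (γ₁ - 1))) • fderiv ℝ (fun y : EuclideanSpace ℝ (Fin d) => ‖y‖) x)‖ ≤
          (L ^ k * r ^ γ₁) * (M₁ / r) + M₀ * ((↑k * L ^ (k - 1) + γ₁ * L ^ k) * r ^ (γ₁ - 1)) := by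
        refine le_trans (norm_add_le _ _) (add_le_add ?_ ?_)
        · rw [norm_smul, Real.norm_eq_abs, habsA]
          exact mul_le_mul_of_nonneg_left hdg (by positivity)
        · rw [norm_smul, norm_smul, Real.norm_eq_abs, Real.norm_eq_abs]
          calc |g x| * (|(↑k * Real.log r ^ (k - 1) * r⁻¹) * r ^ γ₁ +
                Real.log r ^ k * (γ₁ * r ^ (γ₁ - 1))| * ‖fderiv ℝ (fun y : EuclideanSpace ℝ (Fin d) => ‖y‖) x‖)
              ≤ M₀ * (((↑k * L ^ (k - 1) + γ₁ * L ^ k) * r ^ (γ₁ - 1)) * 1) := by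
                apply mul_le_mul hgx _ (by positivity) hM₀
                apply mul_le_mul hF' hN (norm_nonneg _) (by positivity)
            _ = M₀ * ((↑k * L ^ (k - 1) + γ₁ * L ^ k) * r ^ (γ₁ - 1)) := by ring
      exact mul_le_mul (hχ0 x) hinner (norm_nonneg _) hM₂
  refine le_trans step ?_
  -- final arithmetic
  have e1 : (L ^ k * r ^ γ₁) * M₀ * M₃ ≤ C₀ * (M₀ * M₃) * r ^ (γ - 1) := by
    rw [hQ]
    calc L ^ k * (r ^ γ * r ^ γ) * M₀ * M₃ = (L ^ k * r ^ γ) * r ^ γ * (M₀ * M₃) := by ring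
      _ ≤ C₀ * r ^ (γ - 1) * (M₀ * M₃) := by
          refine mul_le_mul_of_nonneg_right ?_ (by positivity)
          exact mul_le_mul hBk hle hrg hC₀.le
      _ = C₀ * (M₀ * M₃) * r ^ (γ - 1) := by ring
  have e2 : (L ^ k * r ^ γ₁) * (M₁ / r) ≤ C₀ * M₁ * r ^ (γ - 1) := by
    have : (L ^ k * r ^ γ₁) * (M₁ / r) = (L ^ k * r ^ γ) * M₁ * r ^ (γ - 1) := by
      rw [div_eq_mul_inv, hQ]
      have : r ^ γ * r ^ γ * r⁻¹ = r ^ γ * r ^ (γ - 1) := by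
        rw [Real.rpow_sub hxn, Real.rpow_one]; field_simp
      calc L ^ k * (r ^ γ * r ^ γ) * (M₁ * r⁻¹) = L ^ k * (r ^ γ * r ^ γ * r⁻¹) * M₁ := by ring
        _ = L ^ k * (r ^ γ * r ^ (γ - 1)) * M₁ := by rw [this]
        _ = L ^ k * r ^ γ * M₁ * r ^ (γ - 1) := by ring
    rw [this]
    apply mul_le_mul_of_nonneg_right _ hrg1
    exact mul_le_mul_of_nonneg_right hBk hM₁
  have e3 : M₀ * ((↑k * L ^ (k - 1) + γ₁ * L ^ k) * r ^ (γ₁ - 1)) ≤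
      (C₁ * (↑k * M₀) + C₀ * (γ₁ * M₀)) * r ^ (γ - 1) := by
    rw [hP]
    have h1 : (↑k * L ^ (k - 1) + γ₁ * L ^ k) * (r ^ γ * r ^ (γ - 1)) =
        (↑k * (L ^ (k - 1) * r ^ γ) + γ₁ * (L ^ k * r ^ γ)) * r ^ (γ - 1) := by ring
    rw [h1, ← mul_assoc]
    apply mul_le_mul_of_nonneg_right _ hrg1
    have h2 : ↑k * (L ^ (k - 1) * r ^ γ) ≤ ↑k * C₁ :=
      mul_le_mul_of_nonneg_left hBk1 (Nat.cast_nonneg k)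
    have h3 : γ₁ * (L ^ k * r ^ γ) ≤ γ₁ * C₀ := mul_le_mul_of_nonneg_left hBk hγ₁.le
    nlinarith [hM₀, h2, h3, mul_le_mul_of_nonneg_left (add_le_add h2 h3) hM₀]
  have efin : (L ^ k * r ^ γ₁) * M₀ * M₃ +
      M₂ * ((L ^ k * r ^ γ₁) * (M₁ / r) + M₀ * ((↑k * L ^ (k - 1) + γ₁ * L ^ k) * r ^ (γ₁ - 1))) ≤
      (C₀ * (M₀ * M₃) + M₂ * (C₀ * M₁ + (C₁ * (↑k * M₀) + C₀ * (γ₁ * M₀)))) * r ^ (γ - 1) := by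
    have h4 := mul_le_mul_of_nonneg_left (add_le_add e2 e3) hM₂
    nlinarith [e1, h4]
  refine le_trans efin ?_
  apply mul_le_mul_of_nonneg_right _ hrg1
  nlinarith [hC₀, hC₁, hM₀, hM₁, hM₂, hM₃, hγ₁, Nat.cast_nonneg (α := ℝ) k]
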